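/- A k-hypergraph (V,H) is exchangeable if and only if its complement (V, H̄) is exchangeable, where H̄ consists of all k-subsets of V not in H. -/

import Mathlib

open Finset

variable {V : Type*}

/-- A `k`-hypergraph `H` is separable if some vertex labeling `x : V → ℝ` has
`H` equal to the set of `k`-subsets with nonnegative label sum. -/
def SeparableHypergraph [Fintype V] [DecidableEq V] (k : ℕ) (H : Finset (Finset V)) : Prop :=
  ∃ x : V → ℝ, ∀ E : Finset V, E ∈ H ↔ E.card = k ∧ 0 ≤ ∑ v ∈ E, x v

/-- A `k`-hypergraph `H` is equatable if some nonzero nonnegative labeling `y` of the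
`k`-subsets of `V` has, for every vertex `v`, the sum of labels of edges containing `v`
equal to the sum of labels of non-edges containing `v`. -/
def EquatableHypergraph [Fintype V] [DecidableEq V] (k : ℕ) (H : Finset (Finset V)) : Prop :=
  ∃ y : Finset V → ℝ,
    (∀ G, 0 ≤ y G) ∧
    (∃ G ∈ (univ : Finset V).powersetCard k, y G ≠ 0) ∧
    ∀ v : V,
      ∑ E ∈ ((univ : Finset V).powersetCard k).filter (fun E => v ∈ E ∧ E ∈ H), y E =
      ∑ F ∈ ((univ : Finset V).powersetCard k).filter (fun F => v ∈ F ∧ F ∉ H), y F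

/-- A hypergraph is exchangeable if there are edges `E₁, E₂` and `v₁ ∈ E₁ \ E₂`,
`v₂ ∈ E₂ \ E₁` such that both sets obtained by exchanging `v₁` and `v₂` are non-edges. -/
def ExchangeableHypergraph [DecidableEq V] (H : Finset (Finset V)) : Prop :=
  ∃ E₁ ∈ H, ∃ E₂ ∈ H, ∃ v₁ ∈ E₁ \ E₂, ∃ v₂ ∈ E₂ \ E₁,
    insert v₂ (E₁.erase v₁) ∉ H ∧ insert v₁ (E₂.erase v₂) ∉ H

private lemma swap_card [DecidableEq V] {F : Finset V} {a b : V} (ha : a ∈ F) (hb : b ∉ F) :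
    (insert b (F.erase a)).card = F.card := by
  have hb' : b ∉ F.erase a := fun h => hb (mem_of_mem_erase h)
  have h1 : 1 ≤ F.card := card_pos.mpr ⟨a, ha⟩
  rw [card_insert_of_notMem hb', card_erase_of_mem ha]
  omega

private lemma swap_swap [DecidableEq V] {F : Finset V} {a b : V} (ha : a ∈ F) (hb : b ∉ F) :
    insert a ((insert b (F.erase a)).erase b) = F := by
  have hb' : b ∉ F.erase a := fun h => hb (mem_of_mem_erase h)
  rw [erase_insert hb', insert_erase ha]

/-- A k-hypergraph is exchangeable iff its complement is exchangeable. -/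
theorem exchangeable_iff_compl_exchangeable [Fintype V] [DecidableEq V] (k : ℕ)
    (H : Finset (Finset V))
    (hk : 1 ≤ k) (hkn : k < Fintype.card V) (hH : ∀ E ∈ H, E.card = k) :
    ExchangeableHypergraph H ↔
      ExchangeableHypergraph ((univ : Finset V).powersetCard k \ H) := by
  constructor
  · rintro ⟨E₁, hE₁, E₂, hE₂, v₁, hv₁, v₂, hv₂, h₁, h₂⟩
    simp only [mem_sdiff] at hv₁ hv₂
    have hne : v₁ ≠ v₂ := fun h => hv₂.2 (h ▸ hv₁.1)
    set F₁ := insert v₂ (E₁.erase v₁) with hF₁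
    set F₂ := insert v₁ (E₂.erase v₂) with hF₂
    have hF₁c : F₁.card = k := by
      rw [hF₁, swap_card hv₁.1 hv₂.2, hH E₁ hE₁]
    have hF₂c : F₂.card = k := by
      rw [hF₂, swap_card hv₂.1 hv₁.2, hH E₂ hE₂]
    have hF₁mem : F₁ ∈ (univ : Finset V).powersetCard k \ H := by
      simp [mem_powersetCard_univ, hF₁c, h₁]
    have hF₂mem : F₂ ∈ (univ : Finset V).powersetCard k \ H := by
      simp [mem_powersetCard_univ, hF₂c, h₂]
    refine ⟨F₁, hF₁mem, F₂, hF₂mem, v₂, ?_, v₁, ?_, ?_, ?_⟩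
    · simp [hF₁, hF₂, mem_erase, hne, hne.symm, hv₂.2]
    · simp [hF₂, hF₁, mem_erase, hne, hne.symm, hv₁.2]
    · rw [hF₁, swap_swap hv₁.1 hv₂.2]
      simp [hE₁]
    · rw [hF₂, swap_swap hv₂.1 hv₁.2]
      simp [hE₂]
  · rintro ⟨F₁, hF₁, F₂, hF₂, w₁, hw₁, w₂, hw₂, h₁, h₂⟩
    simp only [mem_sdiff, mem_powersetCard_univ] at hF₁ hF₂ hw₁ hw₂
    have hne : w₁ ≠ w₂ := fun h => hw₂.2 (h ▸ hw₁.1)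
    set E₁ := insert w₂ (F₁.erase w₁) with hE₁
    set E₂ := insert w₁ (F₂.erase w₂) with hE₂
    have hE₁c : E₁.card = k := by rw [hE₁, swap_card hw₁.1 hw₂.2, hF₁.1]
    have hE₂c : E₂.card = k := by rw [hE₂, swap_card hw₂.1 hw₁.2, hF₂.1]
    have hE₁H : E₁ ∈ H := by
      by_contra hc
      exact h₁ (mem_sdiff.mpr ⟨mem_powersetCard_univ.mpr hE₁c, hc⟩)
    have hE₂H : E₂ ∈ H := by
      by_contra hc
      exact h₂ (mem_sdiff.mpr ⟨mem_powersetCard_univ.mpr hE₂c, hc⟩)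
    refine ⟨E₁, hE₁H, E₂, hE₂H, w₂, ?_, w₁, ?_, ?_, ?_⟩
    · simp [hE₁, hE₂, mem_erase, hne, hne.symm, hw₂.2]
    · simp [hE₂, hE₁, mem_erase, hne, hne.symm, hw₁.2]
    · intro hc
      rw [hE₁, swap_swap hw₁.1 hw₂.2] at hc
      exact hF₁.2 hc
    · intro hc
      rw [hE₂, swap_swap hw₂.1 hw₁.2] at hc
      exact hF₂.2 hc
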